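/- Let F be a field of characteristic different from 2, and let c : F → F be a field automorphism with c ∘ c = id. Let δ, x, y ∈ F satisfy c(δ) = -δ and c(y) = -y. Set z = -δy + (1/2)·δ·x·c(x) and assume z ≠ 0. Consider the 3×3 matrices over F: w = [[0,0,-1],[0,1,0],[1,0,0]] and n = [[1, -δx, z],[0,1,-c(x)],[0,0,1]]. Then w · n · w⁻¹ = u₁ · d · w · u₂, where u₁ = [[1, -δx·c(z)⁻¹, -z⁻¹],[0, 1, -c(x)·z⁻¹],[0,0,1]], d = diag(-c(z)⁻¹, z⁻¹·c(z), -z), and u₂ = [[1, δx·z⁻¹, -z⁻¹],[0, 1, c(x)·c(z)⁻¹],[0,0,1]]. -/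

import Mathlib

set_option maxHeartbeats 1000000 in
/-- The Bruhat-type decomposition of `w · n · w⁻¹` used to analyze conjugation by the Weyl
element in the quasi-split unitary group in three variables.  Here `F` is a field of
characteristic `≠ 2`, `c` an involutive field automorphism of `F`, `δ, x, y ∈ F` with
`c δ = -δ`, `c y = -y`, and `z = -δ y + (1/2) δ x c(x) ≠ 0`. -/
theorem weyl_conjugation_bruhat_decomposition
    {F : Type*} [Field F] (c : F ≃+* F) (hc : ∀ a : F, c (c a) = a)
    (h2 : (2 : F) ≠ 0)
    (δ x y : F) (hδ : c δ = -δ) (hy : c y = -y)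
    (z : F) (hz : z = -δ * y + (2 : F)⁻¹ * δ * x * c x) (hz0 : z ≠ 0) :
    let w : Matrix (Fin 3) (Fin 3) F := !![0, 0, -1; 0, 1, 0; 1, 0, 0]
    let n : Matrix (Fin 3) (Fin 3) F := !![1, -δ * x, z; 0, 1, -(c x); 0, 0, 1]
    let u₁ : Matrix (Fin 3) (Fin 3) F :=
      !![1, -δ * x * (c z)⁻¹, -z⁻¹; 0, 1, -(c x) * z⁻¹; 0, 0, 1]
    let d : Matrix (Fin 3) (Fin 3) F := Matrix.diagonal ![-(c z)⁻¹, z⁻¹ * c z, -z]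
    let u₂ : Matrix (Fin 3) (Fin 3) F :=
      !![1, δ * x * z⁻¹, -z⁻¹; 0, 1, c x * (c z)⁻¹; 0, 0, 1]
    w * n * w⁻¹ = u₁ * d * w * u₂ := by
  intro w n u₁ d u₂
  have hcz : c z = z - δ * x * c x := by
    rw [hz]
    simp only [map_add, map_mul, map_neg, hδ, hy, hc, map_inv₀, map_ofNat]
    field_simp
    ring
  have hczo : c z ≠ 0 := fun h => hz0 (by rw [← hc z, h, map_zero])
  have hne : z - δ * x * c x ≠ 0 := hcz ▸ hczo
  have hd : d = !![-(c z)⁻¹, 0, 0; 0, z⁻¹ * c z, 0; 0, 0, -z] := by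
    show Matrix.diagonal _ = _
    ext i j
    fin_cases i <;> fin_cases j <;>
      simp [Matrix.diagonal, Matrix.vecHead, Matrix.vecTail]
  have hw : w⁻¹ = !![0, 0, 1; 0, 1, 0; -1, 0, 0] := by
    apply Matrix.inv_eq_right_inv
    show w * _ = 1
    rw [Matrix.one_fin_three]
    show (!![0, 0, -1; 0, 1, 0; 1, 0, 0] : Matrix (Fin 3) (Fin 3) F) * _ = _
    norm_num [Matrix.mul_fin_three]
  rw [hw, hd]
  simp only [w, n, u₁, u₂, Matrix.mul_fin_three]
  ext i j
  fin_cases i <;> fin_cases j <;>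
    · simp only [Matrix.cons_val', Matrix.cons_val_zero, Matrix.cons_val_one, Matrix.head_cons,
        Matrix.head_fin_const, Matrix.empty_val', Matrix.cons_val_fin_one, Matrix.of_apply,
        Matrix.cons_val_two, Matrix.tail_cons, Fin.isValue, Fin.zero_eta, Fin.mk_one,
        Fin.reduceFinMk, Matrix.cons_val]
      rw [hcz]
      field_simp
      try ring
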